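/- There exists a universal constant c > 0 such that for every d ≥ 2, every n ∈ ℕ, and every sequence of contexts x^{(1)},…,x^{(n)} ∈ 𝒳 for which 𝒳 ∖ {x^{(1)},…,x^{(n)}} is nonempty, the minimax risk for estimating the contextual CDF in uniform Kolmogorov–Smirnov distance over instances with degenerate design satisfies: inf_{F̂} sup_{ (θ,Φ) ∈ Δ^{d−1} × 𝔅_d with μ_min(U_n^Φ) = 0 } E_{(y^{(1)},…,y^{(n)}) ∼ ⊗_{j=1}^n P^Φ_{Y|x^{(j)};θ}} [ sup_{x ∈ 𝒳, t ∈ ℝ} | F̂(y^{(1)},…,y^{(n)})(x,t) − θᵀΦ(x,t) | ] ≥ c, where the infimum is over all measurable estimators F̂ mapping the data to a contextual CDF, S = [0,1], and 𝔪 is the Lebesgue measure on [0,1]. -/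
import Mathlib


open MeasureTheory ProbabilityTheory Finset Matrix

noncomputable section

/-- Smallest eigenvalue of a (symmetric) real matrix, characterized via the Rayleigh quotient. -/
def muMin {d : ℕ} (A : Matrix (Fin d) (Fin d) ℝ) : ℝ :=
  sInf {r : ℝ | ∃ v : Fin d → ℝ, (∑ i, v i ^ 2) = 1 ∧ r = v ⬝ᵥ A.mulVec v}

lemma muMin_zero_matrix {d : ℕ} (hd : 1 ≤ d) :
    muMin (0 : Matrix (Fin d) (Fin d) ℝ) = 0 := by
  haveI : NeZero d := ⟨by omega⟩
  have hset : {r : ℝ | ∃ v : Fin d → ℝ, (∑ i, v i ^ 2) = 1 ∧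
      r = v ⬝ᵥ (0 : Matrix (Fin d) (Fin d) ℝ).mulVec v} = {0} := by
    ext r
    simp only [Set.mem_setOf_eq, Set.mem_singleton_iff]
    constructor
    · rintro ⟨v, hv, rfl⟩
      simp [Matrix.mulVec, dotProduct]
    · rintro rfl
      refine ⟨fun i => if i = 0 then 1 else 0, ?_, ?_⟩
      · simp [apply_ite (fun x : ℝ => x ^ 2)]
      · simp [Matrix.mulVec, dotProduct]
  rw [muMin, hset, csInf_singleton]

/-- **Proposition (minimax lower bound for CDF estimation in uniform KS distance under
degenerate design).** For every `d ≥ 2`, contexts `x^{1:n}` avoiding at least one point of `𝒳`,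
and every (measurable, CDF-valued) estimator `F̂`, there is an instance `(θ, Φ)` with
`μ_min(U_n^Φ) = 0` (with `S = [0,1]`, `𝔪 = Leb on [0,1]`) on which the expected uniform KS error
is at least a universal constant `c > 0`. -/
theorem minimax_lower_bound_KS_degenerate_design
    {X : Type*} [TopologicalSpace X] [PolishSpace X] [MeasurableSpace X] [BorelSpace X] :
    ∃ c : ℝ, 0 < c ∧
      ∀ (d n : ℕ), 2 ≤ d →
      ∀ xs : ℕ → X, (∃ x0 : X, ∀ j ∈ Finset.Icc 1 n, x0 ≠ xs j) →
      ∀ Fhat : (Fin n → ℝ) → X → ℝ → ℝ,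
        (∀ (x : X) (t : ℝ), Measurable fun ys => Fhat ys x t) →
        (∀ (ys : Fin n → ℝ) (x : X), ∃ μ : Measure ℝ, IsProbabilityMeasure μ ∧
          ∀ t : ℝ, Fhat ys x t = (μ (Set.Iic t)).toReal) →
      ∃ (θ : Fin d → ℝ) (Φ : X → ℝ → Fin d → ℝ) (Q : Measure (Fin n → ℝ)),
        θ ∈ stdSimplex ℝ (Fin d) ∧
        (∀ i : Fin d, Measurable fun p : X × ℝ => Φ p.1 p.2 i) ∧
        (∀ (x : X) (i : Fin d), ∃ μ : Measure ℝ, IsProbabilityMeasure μ ∧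
          ∀ t : ℝ, Φ x t i = (μ (Set.Iic t)).toReal) ∧
        muMin (Matrix.of fun i k => ∑ j ∈ Finset.Icc 1 n,
            ∫ t in Set.Icc (0:ℝ) 1, Φ (xs j) t i * Φ (xs j) t k) = 0 ∧
        IsProbabilityMeasure Q ∧
        (∀ ts : Fin n → ℝ, Q {ys | ∀ j, ys j ≤ ts j}
          = ∏ j : Fin n, ENNReal.ofReal (∑ i, θ i * Φ (xs ((j : ℕ) + 1)) (ts j) i)) ∧
        ENNReal.ofReal c ≤
          ∫⁻ ys, ENNReal.ofReal
            (⨆ x : X, ⨆ t : ℝ, |Fhat ys x t - ∑ i, θ i * Φ x t i|) ∂Q := by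
  classical
  refine ⟨1/2, by norm_num, ?_⟩
  intro d n hd xs hx Fhat hFmeas hFcdf
  obtain ⟨x0, hx0⟩ := hx
  haveI : NeZero d := ⟨by omega⟩
  -- the deterministic data: all observations equal 2
  set ys0 : Fin n → ℝ := fun _ => 2 with hys0
  -- adversarial Dirac location at the unseen point x0
  set b : ℝ := if Fhat ys0 x0 0 ≤ 1/2 then -1 else 2 with hb
  -- step CDF of the Dirac measure at c
  set G : ℝ → ℝ → ℝ := fun c t => if c ≤ t then 1 else 0 with hG
  have hG01 : ∀ c t : ℝ, 0 ≤ G c t ∧ G c t ≤ 1 := by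
    intro c t; simp only [hG]; split_ifs <;> norm_num
  have hsum : ∀ (x : X) (t : ℝ),
      (∑ i : Fin d, (if i = 0 then (1:ℝ) else 0) * (if x = x0 then G b t else G 2 t))
      = (if x = x0 then G b t else G 2 t) := by
    intro x t
    rw [Finset.sum_congr rfl (fun i _ => by rw [ite_mul, one_mul, zero_mul])]
    simp
  refine ⟨fun i => if i = 0 then 1 else 0,
          fun x t _ => if x = x0 then G b t else G 2 t,
          Measure.dirac ys0, ?_, ?_, ?_, ?_, ?_, ?_, ?_⟩
  · -- θ ∈ stdSimplex
    constructor
    · intro i; dsimp only; split_ifs <;> norm_num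
    · simp
  · -- measurability of Φ
    intro i
    refine Measurable.ite ?_ ?_ ?_
    · exact measurable_fst (measurableSet_singleton x0)
    · exact Measurable.ite (measurableSet_le measurable_const measurable_snd)
        measurable_const measurable_const
    · exact Measurable.ite (measurableSet_le measurable_const measurable_snd)
        measurable_const measurable_const
  · -- each Φ x · i is a CDF
    intro x i
    refine ⟨Measure.dirac (if x = x0 then b else 2), inferInstance, fun t => ?_⟩
    show (if x = x0 then G b t else G 2 t)
      = ((Measure.dirac (if x = x0 then b else 2)) (Set.Iic t)).toReal
    have hcomm : (if x = x0 then G b t else G 2 t) = G (if x = x0 then b else 2) t := by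
      split_ifs <;> rfl
    rw [hcomm, Measure.dirac_apply]
    simp only [hG]
    by_cases hct : (if x = x0 then b else 2) ≤ t
    · rw [if_pos hct, Set.indicator_of_mem (Set.mem_Iic.mpr hct)]; simp
    · rw [if_neg hct, Set.indicator_of_notMem (by simpa using hct)]; simp
  · -- degenerate design: the Gram matrix is zero
    have hmat : (Matrix.of fun i k => ∑ j ∈ Finset.Icc 1 n,
        ∫ t in Set.Icc (0:ℝ) 1,
          (if xs j = x0 then G b t else G 2 t) * (if xs j = x0 then G b t else G 2 t))
        = (0 : Matrix (Fin d) (Fin d) ℝ) := by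
      ext i k
      simp only [Matrix.of_apply, Matrix.zero_apply]
      refine Finset.sum_eq_zero fun j hj => ?_
      have hne : xs j ≠ x0 := fun h => hx0 j hj h.symm
      simp only [hne, if_false]
      rw [setIntegral_congr_fun measurableSet_Icc
        (g := fun _ => (0:ℝ)) fun t ht => by
          simp only [hG]
          rw [if_neg (by simp only [Set.mem_Icc] at ht; linarith)]
          ring]
      simp
    rw [hmat, muMin_zero_matrix (by omega)]
  · infer_instance
  · -- the finite-dimensional law of Q
    intro ts
    have hxs : ∀ j : Fin n, xs ((j : ℕ) + 1) ≠ x0 := fun j h =>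
      hx0 ((j : ℕ) + 1) (Finset.mem_Icc.mpr ⟨by omega, by omega⟩) h.symm
    have hterm : ∀ j : Fin n,
        ENNReal.ofReal (∑ i : Fin d, (if i = 0 then (1:ℝ) else 0) *
          (if xs ((j : ℕ) + 1) = x0 then G b (ts j) else G 2 (ts j)))
        = if (2:ℝ) ≤ ts j then 1 else 0 := by
      intro j
      rw [hsum, if_neg (hxs j)]
      simp only [hG]
      split_ifs <;> simp
    rw [Measure.dirac_apply, Finset.prod_congr rfl (fun j _ => hterm j)]
    by_cases hall : ∀ j : Fin n, (2:ℝ) ≤ ts j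
    · rw [Set.indicator_of_mem (show ys0 ∈ {ys : Fin n → ℝ | ∀ j, ys j ≤ ts j} from fun j => hall j),
        Finset.prod_congr rfl (fun j _ => if_pos (hall j))]
      simp
    · push_neg at hall
      obtain ⟨j0, hj0⟩ := hall
      rw [Set.indicator_of_notMem (show ys0 ∉ {ys : Fin n → ℝ | ∀ j, ys j ≤ ts j}
          from fun hmem => absurd (hmem j0) (not_le.mpr hj0)),
        Finset.prod_eq_zero (Finset.mem_univ j0)
          (show (if (2:ℝ) ≤ ts j0 then (1:ENNReal) else 0) = 0 from if_neg (not_le.mpr hj0))]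
  · -- the lower bound on the risk
    rw [lintegral_dirac]
    refine ENNReal.ofReal_le_ofReal ?_
    have hF01 : ∀ (x : X) (t : ℝ), 0 ≤ Fhat ys0 x t ∧ Fhat ys0 x t ≤ 1 := by
      intro x t
      obtain ⟨μ, hμ, hμt⟩ := hFcdf ys0 x
      rw [hμt t]
      refine ⟨ENNReal.toReal_nonneg, ?_⟩
      have h1 : μ (Set.Iic t) ≤ 1 := prob_le_one
      simpa using ENNReal.toReal_mono (by simp) h1
    have hbound : ∀ (x : X) (t : ℝ),
        |Fhat ys0 x t - ∑ i : Fin d, (if i = 0 then (1:ℝ) else 0) *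
          (if x = x0 then G b t else G 2 t)| ≤ 1 := by
      intro x t
      rw [hsum x t]
      obtain ⟨h0, h1⟩ := hF01 x t
      have hΦ01 : 0 ≤ (if x = x0 then G b t else G 2 t) ∧
          (if x = x0 then G b t else G 2 t) ≤ 1 := by
        split_ifs with hc
        exacts [hG01 b t, hG01 2 t]
      rw [abs_le]
      constructor <;> [linarith [hΦ01.2]; linarith [hΦ01.1]]
    have hkey : 1/2 ≤ |Fhat ys0 x0 0 - ∑ i : Fin d, (if i = 0 then (1:ℝ) else 0) *
        (if x0 = x0 then G b 0 else G 2 0)| := by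
      rw [hsum x0 0, if_pos rfl]
      by_cases hc : Fhat ys0 x0 0 ≤ 1/2
      · have hb1 : G b 0 = 1 := by
          rw [hb, if_pos hc]; simp only [hG]; norm_num
        rw [hb1, abs_sub_comm, abs_of_nonneg (by linarith)]
        linarith
      · have hb0 : G b 0 = 0 := by
          rw [hb, if_neg hc]; simp only [hG]; norm_num
        push_neg at hc
        rw [hb0, sub_zero, abs_of_pos (by linarith)]
        linarith
    have hbdd_in : BddAbove (Set.range fun t =>
        |Fhat ys0 x0 t - ∑ i : Fin d, (if i = 0 then (1:ℝ) else 0) *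
          (if x0 = x0 then G b t else G 2 t)|) := by
      refine ⟨1, ?_⟩
      rintro r ⟨t, rfl⟩
      exact hbound x0 t
    have hbdd_out : BddAbove (Set.range fun x => ⨆ t,
        |Fhat ys0 x t - ∑ i : Fin d, (if i = 0 then (1:ℝ) else 0) *
          (if x = x0 then G b t else G 2 t)|) := by
      refine ⟨1, ?_⟩
      rintro r ⟨x, rfl⟩
      exact ciSup_le (hbound x)
    calc (1:ℝ)/2
        ≤ |Fhat ys0 x0 0 - ∑ i : Fin d, (if i = 0 then (1:ℝ) else 0) *
            (if x0 = x0 then G b 0 else G 2 0)| := hkey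
      _ ≤ ⨆ t, |Fhat ys0 x0 t - ∑ i : Fin d, (if i = 0 then (1:ℝ) else 0) *
            (if x0 = x0 then G b t else G 2 t)| := le_ciSup hbdd_in 0
      _ ≤ ⨆ x, ⨆ t, |Fhat ys0 x t - ∑ i : Fin d, (if i = 0 then (1:ℝ) else 0) *
            (if x = x0 then G b t else G 2 t)| := le_ciSup hbdd_out x0

end
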